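/- Let a < b be real numbers and let u, v, w : [a,b] → ℝ satisfy: u is nonnegative and Lebesgue integrable on [a,b]; v is absolutely continuous on [a,b], i.e. there is a Lebesgue integrable function v' on [a,b] with v(t) = v(a) + ∫_a^t v'(s) ds for all t ∈ [a,b]; w is continuous on [a,b]; and w(t) ≤ v(t) + ∫_a^t u(s)·w(s) ds for all t ∈ [a,b]. Then for every t ∈ [a,b], w(t) ≤ v(a)·exp(∫_a^t u(s) ds) + ∫_a^t exp(∫_s^t u(r) dr)·v'(s) ds. -/

import Mathlib

open MeasureTheory Set intervalIntegral
open scoped Nat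

lemma tri_aux (c t : ℝ) (hct : c ≤ t) (F G : ℝ → ℝ) (K : ℝ × ℝ → ℝ) (M : ℝ)
    (hF : IntegrableOn F (Icc c t)) (hG : IntegrableOn G (Icc c t))
    (hK : Continuous K) (hKb : ∀ p, ‖K p‖ ≤ M) :
    (∫ s in c..t, F s * ∫ r in c..s, G r * K (r, s)) =
      ∫ r in c..t, G r * ∫ s in r..t, F s * K (r, s) := by
  set μ := volume.restrict (Ioc c t) with hμ
  have hFμ : Integrable F μ := hF.mono_set Ioc_subset_Icc_self
  have hGμ : Integrable G μ := hG.mono_set Ioc_subset_Icc_self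
  set Φ : ℝ × ℝ → ℝ :=
    fun p => Set.indicator {q : ℝ × ℝ | q.1 ≤ q.2} (fun q => K q * (G q.1 * F q.2)) p with hΦ
  have hbase : Integrable (fun p : ℝ × ℝ => G p.1 * F p.2) (μ.prod μ) := hGμ.mul_prod hFμ
  have hbaseK : Integrable (fun p : ℝ × ℝ => K p * (G p.1 * F p.2)) (μ.prod μ) :=
    hbase.bdd_mul hK.aestronglyMeasurable (Filter.Eventually.of_forall hKb)
  have hΦint : Integrable Φ (μ.prod μ) :=
    hbaseK.indicator (measurableSet_le measurable_fst measurable_snd)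
  have hswap : Integrable (Φ ∘ Prod.swap) (μ.prod μ) := hΦint.swap
  have hL : (∫ s in c..t, F s * ∫ r in c..s, G r * K (r, s)) = ∫ s, ∫ r, Φ (r, s) ∂μ ∂μ := by
    rw [intervalIntegral.integral_of_le hct]
    refine setIntegral_congr_fun measurableSet_Ioc (fun s hs => ?_)
    have h1 : (fun r => Φ (r, s)) = Set.indicator (Iic s) (fun r => K (r, s) * (G r * F s)) := by
      funext r
      by_cases h : r ≤ s <;>
        simp [hΦ, Set.indicator_apply, h]
    rw [h1, setIntegral_indicator measurableSet_Iic]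
    have h2 : Ioc c t ∩ Iic s = Ioc c s := by
      ext x; simp only [mem_inter_iff, mem_Ioc, mem_Iic]
      exact ⟨fun h => ⟨h.1.1, h.2⟩, fun h => ⟨⟨h.1, h.2.trans hs.2⟩, h.2⟩⟩
    rw [h2, intervalIntegral.integral_of_le hs.1.le]
    rw [show (fun r => K (r, s) * (G r * F s)) = fun r => (G r * K (r, s)) * F s by
      funext r; ring]
    rw [MeasureTheory.integral_mul_const, mul_comm]
  have hR : (∫ r in c..t, G r * ∫ s in r..t, F s * K (r, s)) = ∫ r, ∫ s, Φ (r, s) ∂μ ∂μ := by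
    rw [intervalIntegral.integral_of_le hct]
    refine setIntegral_congr_fun measurableSet_Ioc (fun r hr => ?_)
    have h1 : (fun s => Φ (r, s)) = Set.indicator (Ici r) (fun s => K (r, s) * (G r * F s)) := by
      funext s
      by_cases h : r ≤ s <;>
        simp [hΦ, Set.indicator_apply, h]
    rw [h1, setIntegral_indicator measurableSet_Ici]
    have h2 : Ioc c t ∩ Ici r = Icc r t := by
      ext x; simp only [mem_inter_iff, mem_Ioc, mem_Icc, mem_Ici]
      exact ⟨fun h => ⟨h.2, h.1.2⟩, fun h => ⟨⟨hr.1.trans_le h.1, h.2⟩, h.1⟩⟩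
    rw [h2, integral_Icc_eq_integral_Ioc, ← intervalIntegral.integral_of_le hr.2]
    rw [show (fun s => K (r, s) * (G r * F s)) = fun s => (F s * K (r, s)) * G r by
      funext s; ring]
    rw [intervalIntegral.integral_mul_const, mul_comm]
  rw [hL, hR]
  exact integral_integral_swap hswap

lemma Bpow (u : ℝ → ℝ) (hu : Integrable u) (c : ℝ) (n : ℕ) :
    ∀ t, c ≤ t → (∫ s in c..t, u s * (∫ r in c..s, u r) ^ n)
      = (∫ r in c..t, u r) ^ (n + 1) / ((n : ℝ) + 1) := by
  induction n with
  | zero => intro t hct; simp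
  | succ n ih =>
    intro t hct
    set V : ℝ → ℝ := fun s => ∫ r in c..s, u r with hV
    have hVc : Continuous V :=
      intervalIntegral.continuous_primitive (fun a b => hu.intervalIntegrable) c
    have hFint : ∀ m : ℕ, IntegrableOn (fun s => u s * V s ^ m) (Icc c t) := fun m =>
      (hu.integrableOn).mul_continuousOn ((hVc.pow m).continuousOn) isCompact_Icc
    have hiF : ∀ x y, x ∈ Icc c t → y ∈ Icc c t →
        IntervalIntegrable (fun s => u s * V s ^ n) volume x y := by
      intro x y hx hy
      exact ((hFint n).mono_set (uIcc_subset_Icc hx hy)).intervalIntegrable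
    have hinner : ∀ r ∈ Icc c t, (∫ s in r..t, u s * V s ^ n)
        = V t ^ (n + 1) / ((n : ℝ) + 1) - V r ^ (n + 1) / ((n : ℝ) + 1) := by
      intro r hr
      have h1 : (∫ s in c..r, u s * V s ^ n) = V r ^ (n + 1) / ((n : ℝ) + 1) := ih r hr.1
      have h2 : (∫ s in c..t, u s * V s ^ n) = V t ^ (n + 1) / ((n : ℝ) + 1) := ih t hct
      have hadd := integral_add_adjacent_intervals
        (hiF c r (left_mem_Icc.2 hct) hr) (hiF r t hr (right_mem_Icc.2 hct))
      linarith
    have htri := tri_aux c t hct (fun s => u s * V s ^ n) u (fun _ => (1 : ℝ)) 1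
      (hFint n) hu.integrableOn continuous_const (by norm_num)
    simp only [mul_one] at htri
    have hL : (∫ s in c..t, u s * V s ^ (n + 1))
        = ∫ s in c..t, (u s * V s ^ n) * ∫ r in c..s, u r := by
      refine intervalIntegral.integral_congr (fun s _ => ?_)
      show u s * V s ^ (n + 1) = (u s * V s ^ n) * V s
      ring
    have hR : (∫ r in c..t, u r * ∫ s in r..t, u s * V s ^ n)
        = ∫ r in c..t, (u r * (V t ^ (n + 1) / ((n : ℝ) + 1))
            - (u r * V r ^ (n + 1)) / ((n : ℝ) + 1)) := by
      refine intervalIntegral.integral_congr (fun r hr => ?_)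
      rw [hinner r (by rwa [uIcc_of_le hct] at hr)]
      ring
    have hsplit : (∫ r in c..t, (u r * (V t ^ (n + 1) / ((n : ℝ) + 1))
            - (u r * V r ^ (n + 1)) / ((n : ℝ) + 1)))
        = (∫ r in c..t, u r) * (V t ^ (n + 1) / ((n : ℝ) + 1))
          - (∫ r in c..t, u r * V r ^ (n + 1)) / ((n : ℝ) + 1) := by
      rw [intervalIntegral.integral_sub (hu.intervalIntegrable.mul_const _)
        (((hFint (n+1)).mono_set (uIcc_subset_Icc (left_mem_Icc.2 hct)
          (right_mem_Icc.2 hct))).intervalIntegrable.div_const _),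
        intervalIntegral.integral_mul_const, intervalIntegral.integral_div]
    have hkey : (∫ s in c..t, u s * V s ^ (n + 1))
        = V t * (V t ^ (n + 1) / ((n : ℝ) + 1))
          - (∫ s in c..t, u s * V s ^ (n + 1)) / ((n : ℝ) + 1) := by
      exact (hL.trans htri).trans (hR.trans hsplit)
    have hn1 : ((n : ℝ) + 1) ≠ 0 := by positivity
    push_cast
    show (∫ s in c..t, u s * V s ^ (n + 1)) = V t ^ (n + 1 + 1) / ((n : ℝ) + 1 + 1)
    set X := ∫ s in c..t, u s * V s ^ (n + 1) with hX
    have h2 : X * ((n : ℝ) + 2) = V t ^ (n + 2) := by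
      field_simp at hkey
      ring_nf at hkey ⊢
      linarith
    rw [eq_div_iff (by positivity)]
    rw [show V t ^ (n + 1 + 1) = V t ^ (n + 2) by norm_num, ← h2]
    ring

lemma expId (u : ℝ → ℝ) (hu : Integrable u) (hu0 : ∀ s, 0 ≤ u s) (c t : ℝ) (hct : c ≤ t) :
    (∫ s in c..t, u s * Real.exp (∫ r in c..s, u r))
      = Real.exp (∫ r in c..t, u r) - 1 := by
  have hexp : ∀ x : ℝ, Real.exp x = ∑' n : ℕ, x ^ n / n ! := by
    intro x
    rw [Real.exp_eq_exp_ℝ, NormedSpace.exp_eq_tsum_div]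
  set V : ℝ → ℝ := fun s => ∫ r in c..s, u r with hV
  have hVc : Continuous V :=
    intervalIntegral.continuous_primitive (fun a b => hu.intervalIntegrable) c
  have hV0 : ∀ s, c ≤ s → 0 ≤ V s := fun s hs =>
    intervalIntegral.integral_nonneg hs (fun x _ => hu0 x)
  set μ := volume.restrict (Ioc c t) with hμ
  set f : ℕ → ℝ → ℝ := fun n s => u s * (V s ^ n / n !) with hf
  have hfmeas : ∀ n, AEStronglyMeasurable (f n) μ :=
    fun n => (hu.aestronglyMeasurable.mul
      ((hVc.pow n).div_const _).aestronglyMeasurable).restrict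
  have hfintOn : ∀ n : ℕ, Integrable (f n) μ := fun n =>
    ((hu.integrableOn.mul_continuousOn ((hVc.pow n).div_const _).continuousOn
      isCompact_Icc).mono_set Ioc_subset_Icc_self)
  have hfint : ∀ n : ℕ, (∫ s, f n s ∂μ) = V t ^ (n + 1) / ((n + 1)! : ℝ) := by
    intro n
    have e1 : (∫ s, f n s ∂μ) = ∫ s in c..t, u s * (V s ^ n / n !) := by
      rw [intervalIntegral.integral_of_le hct]
    rw [e1]
    have e2 : (∫ s in c..t, u s * (V s ^ n / n !))
        = (∫ s in c..t, u s * V s ^ n) / (n ! : ℝ) := by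
      rw [← intervalIntegral.integral_div]
      exact intervalIntegral.integral_congr (fun s _ => by ring)
    rw [e2, Bpow u hu c n t hct, div_div, Nat.factorial_succ]
    push_cast
    simp only [hV]
  have hsum : Summable (fun n : ℕ => V t ^ (n + 1) / ((n + 1)! : ℝ)) :=
    (summable_nat_add_iff 1).mpr (Real.summable_pow_div_factorial (V t))
  have htsum_a : ∑' n : ℕ, V t ^ (n + 1) / ((n + 1)! : ℝ) = Real.exp (V t) - 1 := by
    have h0 := Summable.tsum_eq_zero_add (Real.summable_pow_div_factorial (V t))
    rw [hexp (V t)]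
    simp only [pow_zero, Nat.factorial_zero, Nat.cast_one, div_one] at h0
    linarith
  have hpt : ∀ s, u s * Real.exp (V s) = ∑' n, f n s := by
    intro s
    rw [hexp (V s), hf]
    exact tsum_mul_left.symm
  have hbound : ∑' n, ∫⁻ s, ‖f n s‖₊ ∂μ ≠ ⊤ := by
    have h1 : ∀ n : ℕ, ∫⁻ s, ‖f n s‖₊ ∂μ = ENNReal.ofReal (V t ^ (n + 1) / ((n + 1)! : ℝ)) := by
      intro n
      have hnn : 0 ≤ᵐ[μ] f n := by
        rw [hμ, Filter.EventuallyLE, ae_restrict_iff' measurableSet_Ioc]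
        filter_upwards with s hs
        exact mul_nonneg (hu0 s) (div_nonneg (pow_nonneg (hV0 s hs.1.le) n)
          (Nat.cast_nonneg _))
      rw [← hfint n, ofReal_integral_eq_lintegral_ofReal (hfintOn n) hnn]
      refine lintegral_congr_ae ?_
      filter_upwards [hnn] with s hs
      exact Real.enorm_eq_ofReal hs
    rw [funext h1, ← ENNReal.ofReal_tsum_of_nonneg (fun n => div_nonneg
      (pow_nonneg (hV0 t hct) _) (Nat.cast_nonneg _)) hsum]
    exact ENNReal.ofReal_ne_top
  calc (∫ s in c..t, u s * Real.exp (V s))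
      = ∫ s, ∑' n, f n s ∂μ := by
        rw [intervalIntegral.integral_of_le hct]
        exact setIntegral_congr_fun measurableSet_Ioc (fun s _ => hpt s)
    _ = ∑' n, ∫ s, f n s ∂μ := integral_tsum hfmeas hbound
    _ = ∑' n : ℕ, V t ^ (n + 1) / ((n + 1)! : ℝ) := by
        exact tsum_congr (fun n => hfint n)
    _ = Real.exp (V t) - 1 := htsum_a

lemma gron0 (a b : ℝ) (hab : a ≤ b) (u d : ℝ → ℝ) (hu : Integrable u) (hu0 : ∀ s, 0 ≤ u s)
    (hd : ContinuousOn d (Icc a b))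
    (h : ∀ t ∈ Icc a b, d t ≤ ∫ s in a..t, u s * d s) :
    ∀ t ∈ Icc a b, d t ≤ 0 := by
  have hud : IntegrableOn (fun s => u s * d s) (Icc a b) :=
    hu.integrableOn.mul_continuousOn hd isCompact_Icc
  have hudI : ∀ x y, x ∈ Icc a b → y ∈ Icc a b →
      IntervalIntegrable (fun s => u s * d s) volume x y := fun x y hx hy =>
    (hud.mono_set (uIcc_subset_Icc hx hy)).intervalIntegrable
  set S : Set ℝ := {x | x ∈ Icc a b ∧ ∀ s ∈ Icc a x, d s ≤ 0} with hS
  have haS : a ∈ S := by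
    refine ⟨⟨le_refl a, hab⟩, fun s hs => ?_⟩
    have : s = a := le_antisymm hs.2 hs.1
    subst this
    have := h s ⟨le_refl s, hab⟩
    simpa using this
  have hSne : S.Nonempty := ⟨a, haS⟩
  have hSbdd : BddAbove S := ⟨b, fun x hx => hx.1.2⟩
  set c := sSup S with hc
  have hac : a ≤ c := le_csSup hSbdd haS
  have hcb : c ≤ b := csSup_le hSne (fun x hx => hx.1.2)
  have hlt : ∀ s, a ≤ s → s < c → d s ≤ 0 := by
    intro s _ hsc
    obtain ⟨x, hxS, hsx⟩ := exists_lt_of_lt_csSup hSne hsc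
    exact hxS.2 s ⟨‹a ≤ s›, hsx.le⟩
  have hneg : ∀ s ∈ Icc a c, d s ≤ 0 := by
    intro s hs
    rcases lt_or_eq_of_le hs.2 with hlt' | heq
    · exact hlt s hs.1 hlt'
    · have hsb : s ≤ b := heq.le.trans hcb
      refine (h s ⟨hs.1, hsb⟩).trans ?_
      rw [intervalIntegral.integral_of_le hs.1, integral_Ioc_eq_integral_Ioo]
      refine setIntegral_nonpos measurableSet_Ioo (fun y hy => ?_)
      exact mul_nonpos_of_nonneg_of_nonpos (hu0 y) (hlt y hy.1.le (hy.2.trans_le (le_of_eq heq)))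
  have hcb' : c = b := by
    by_contra hne
    have hcltb : c < b := lt_of_le_of_ne hcb hne
    have hP : Continuous (fun x => ∫ s in c..x, u s) :=
      intervalIntegral.continuous_primitive (fun _ _ => hu.intervalIntegrable) c
    obtain ⟨δ, hδpos, hδ⟩ := Metric.continuousAt_iff.mp hP.continuousAt (1/2) one_half_pos
    set e := min (δ/2) (b - c) with he
    have hepos : 0 < e := lt_min (by linarith) (by linarith)
    set c' := c + e with hc'
    have hcc' : c ≤ c' := by simp [hc', hepos.le]
    have hc'b : c' ≤ b := by
      have : e ≤ b - c := min_le_right _ _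
      simp [hc']; linarith
    have hPc' : (∫ s in c..c', u s) ≤ 1/2 := by
      have hd1 : dist c' c < δ := by
        simp only [Real.dist_eq, hc', add_sub_cancel_left]
        rw [abs_of_pos hepos]
        have : e ≤ δ/2 := min_le_left _ _
        linarith
      have := hδ hd1
      simp only [Real.dist_eq, intervalIntegral.integral_same, sub_zero] at this
      exact (le_abs_self _).trans this.le
    obtain ⟨x, hxmem, hxmax⟩ := isCompact_Icc.exists_isMaxOn (nonempty_Icc.2 hcc')
      (hd.mono (Icc_subset_Icc (hac) hc'b))
    set M := max (d x) 0 with hM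
    have hM0 : 0 ≤ M := le_max_right _ _
    have hbd : ∀ t' ∈ Icc c c', d t' ≤ M * (1/2) := by
      intro t' ht'
      have ht'ab : t' ∈ Icc a b := ⟨hac.trans ht'.1, ht'.2.trans hc'b⟩
      have hsplit := integral_add_adjacent_intervals
        (hudI a c ⟨le_refl a, hab⟩ ⟨hac, hcb⟩)
        (hudI c t' ⟨hac, hcb⟩ ht'ab)
      have h1 : (∫ s in a..c, u s * d s) ≤ 0 := by
        rw [intervalIntegral.integral_of_le hac, integral_Ioc_eq_integral_Ioo]
        refine setIntegral_nonpos measurableSet_Ioo (fun y hy => ?_)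
        exact mul_nonpos_of_nonneg_of_nonpos (hu0 y) (hlt y hy.1.le hy.2)
      have h2 : (∫ s in c..t', u s * d s) ≤ ∫ s in c..t', u s * M := by
        refine intervalIntegral.integral_mono_on ht'.1
          (hudI c t' ⟨hac, hcb⟩ ht'ab) (hu.intervalIntegrable.mul_const _) (fun y hy => ?_)
        refine mul_le_mul_of_nonneg_left ?_ (hu0 y)
        exact le_trans (hxmax ⟨hy.1, hy.2.trans ht'.2⟩) (le_max_left _ _)
      have h3 : (∫ s in c..t', u s * M) = (∫ s in c..t', u s) * M :=
        intervalIntegral.integral_mul_const _ _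
      have h4 : (∫ s in c..t', u s) ≤ ∫ s in c..c', u s := by
        have hadd := integral_add_adjacent_intervals
          (hu.intervalIntegrable (a := c) (b := t')) (hu.intervalIntegrable (a := t') (b := c'))
        have h5 : 0 ≤ ∫ s in t'..c', u s :=
          intervalIntegral.integral_nonneg ht'.2 (fun y _ => hu0 y)
        linarith
      have h6 : (∫ s in c..t', u s) * M ≤ (1/2) * M := by
        refine mul_le_mul_of_nonneg_right ?_ hM0
        exact h4.trans hPc'
      calc d t' ≤ ∫ s in a..t', u s * d s := h t' ht'ab
        _ = (∫ s in a..c, u s * d s) + ∫ s in c..t', u s * d s := hsplit.symm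
        _ ≤ 0 + (∫ s in c..t', u s) * M := by rw [← h3]; exact add_le_add h1 h2
        _ ≤ (1/2) * M := by rw [zero_add]; exact h6
        _ = M * (1/2) := by ring
    have hMle : M ≤ 0 := by
      have hdx := hbd x hxmem
      rcases le_or_gt (d x) 0 with h' | h'
      · rw [hM]
        simp [h']
      · rw [hM, max_eq_left h'.le] at hdx ⊢
        linarith
    have hc'S : c' ∈ S := by
      refine ⟨⟨hac.trans hcc', hc'b⟩, fun s hs => ?_⟩
      rcases le_total s c with h' | h'
      · exact hneg s ⟨hs.1, h'⟩
      · exact le_trans (le_trans (hxmax ⟨h', hs.2⟩) (le_max_left _ _)) hMle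
    have := le_csSup hSbdd hc'S
    rw [← hc] at this
    have : c + e ≤ c := this
    linarith
  intro t ht
  exact hneg t ⟨ht.1, hcb' ▸ ht.2⟩

/-- Generalized Gronwall-type integral inequality (Lemma 2.16). -/
theorem gronwall_type_inequality
    (a b : ℝ) (hab : a < b) (u v w v' : ℝ → ℝ)
    (hu_nonneg : ∀ t ∈ Icc a b, 0 ≤ u t)
    (hu_int : IntegrableOn u (Icc a b))
    (hv'_int : IntegrableOn v' (Icc a b))
    (hv_ac : ∀ t ∈ Icc a b, v t = v a + ∫ s in a..t, v' s)
    (hw_cont : ContinuousOn w (Icc a b))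
    (hineq : ∀ t ∈ Icc a b, w t ≤ v t + ∫ s in a..t, u s * w s) :
    ∀ t ∈ Icc a b,
      w t ≤ v a * Real.exp (∫ s in a..t, u s)
            + ∫ s in a..t, Real.exp (∫ r in s..t, u r) * v' s := by
  set u₀ : ℝ → ℝ := (Icc a b).indicator u with hu₀def
  set v₀ : ℝ → ℝ := (Icc a b).indicator v' with hv₀def
  have hu₀eq : ∀ s ∈ Icc a b, u₀ s = u s := fun s hs => indicator_of_mem hs u
  have hv₀eq : ∀ s ∈ Icc a b, v₀ s = v' s := fun s hs => indicator_of_mem hs v'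
  have hu₀int : Integrable u₀ := hu_int.integrable_indicator measurableSet_Icc
  have hv₀int : Integrable v₀ := hv'_int.integrable_indicator measurableSet_Icc
  have hu₀0 : ∀ s, 0 ≤ u₀ s := by
    intro s
    by_cases hs : s ∈ Icc a b
    · rw [hu₀def, indicator_of_mem hs]; exact hu_nonneg s hs
    · rw [hu₀def, indicator_of_notMem hs]
  set U : ℝ → ℝ := fun x => ∫ s in a..x, u₀ s with hUdef
  have hUx : ∀ x, (∫ s in a..x, u₀ s) = U x := fun x => rfl
  have hUc : Continuous U :=
    intervalIntegral.continuous_primitive (fun _ _ => hu₀int.intervalIntegrable) a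
  have hUdiff : ∀ x y, (∫ s in x..y, u₀ s) = U y - U x := by
    intro x y
    have h := integral_add_adjacent_intervals (hu₀int.intervalIntegrable (a := a) (b := x))
      (hu₀int.intervalIntegrable (a := x) (b := y))
    simp_rw [hUx] at h
    linarith
  have hU0 : ∀ x, 0 ≤ U x := by
    intro x
    rcases le_or_gt a x with hx | hx
    · rw [← hUx]
      exact intervalIntegral.integral_nonneg hx (fun s _ => hu₀0 s)
    · have h1 : U x = -∫ s in x..a, u₀ s := by
        rw [← hUx, intervalIntegral.integral_symm]
      have h2 : (∫ s in x..a, u₀ s) = 0 := by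
        rw [intervalIntegral.integral_of_le hx.le, hu₀def,
          setIntegral_indicator measurableSet_Icc]
        have : Ioc x a ∩ Icc a b = {a} := by
          ext y
          simp only [mem_inter_iff, mem_Ioc, mem_Icc, mem_singleton_iff]
          constructor
          · rintro ⟨⟨_, h1⟩, ⟨h2, _⟩⟩; linarith
          · rintro rfl; exact ⟨⟨hx, le_refl _⟩, le_refl _, hab.le⟩
        rw [this, show volume.restrict ({a} : Set ℝ) = 0 from
          Measure.restrict_eq_zero.2 (measure_singleton a)]
        exact integral_zero_measure _
      rw [h1, h2]; norm_num
  have hUb : ∀ x, U x ≤ U b := by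
    intro x
    rcases le_or_gt x b with hx | hx
    · have := hUdiff x b
      have h2 : 0 ≤ ∫ s in x..b, u₀ s :=
        intervalIntegral.integral_nonneg hx (fun s _ => hu₀0 s)
      linarith
    · have h1 := hUdiff b x
      have h2 : (∫ s in b..x, u₀ s) = 0 := by
        rw [intervalIntegral.integral_of_le hx.le, hu₀def,
          setIntegral_indicator measurableSet_Icc]
        have : Ioc b x ∩ Icc a b = ∅ := by
          ext y
          simp only [mem_inter_iff, mem_Ioc, mem_Icc, mem_empty_iff_false, iff_false]
          rintro ⟨⟨h1, _⟩, ⟨_, h2⟩⟩; linarith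
        rw [this]
        simp
      linarith
  -- the integrand of the primitive P
  have hiP : Integrable (fun s => Real.exp (-U s) * v₀ s) := by
    refine hv₀int.bdd_mul (c := 1) ((Real.continuous_exp.comp hUc.neg).aestronglyMeasurable) (Filter.Eventually.of_forall ?_)
    intro x
    rw [Real.norm_eq_abs, Real.abs_exp]
    exact Real.exp_le_one_iff.2 (by linarith [hU0 x])
  set P : ℝ → ℝ := fun x => ∫ s in a..x, Real.exp (-U s) * v₀ s with hPdef
  have hPx : ∀ x, (∫ s in a..x, Real.exp (-U s) * v₀ s) = P x := fun x => rfl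
  have hPc : Continuous P :=
    intervalIntegral.continuous_primitive (fun _ _ => hiP.intervalIntegrable) a
  set G : ℝ → ℝ := fun x => v a * Real.exp (U x) + Real.exp (U x) * P x with hGdef
  have hGx : ∀ x, v a * Real.exp (U x) + Real.exp (U x) * P x = G x := fun x => rfl
  have hGc : Continuous G := by
    rw [hGdef]
    exact (continuous_const.mul (Real.continuous_exp.comp hUc)).add
      ((Real.continuous_exp.comp hUc).mul hPc)
  -- kernel
  set K : ℝ × ℝ → ℝ := fun p => Real.exp (U p.2 - U p.1) with hKdef
  have hKc : Continuous K := by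
    rw [hKdef]
    exact Real.continuous_exp.comp ((hUc.comp continuous_snd).sub (hUc.comp continuous_fst))
  have hKb : ∀ p, ‖K p‖ ≤ Real.exp (U b) := by
    intro p
    rw [hKdef, Real.norm_eq_abs, Real.abs_exp]
    exact Real.exp_le_exp.2 (by linarith [hU0 p.1, hUb p.2])
  -- key identity : G solves the integral equation
  have hGeq : ∀ τ ∈ Icc a b, v τ + (∫ s in a..τ, u₀ s * G s) = G τ := by
    intro τ hτ
    have haτ : a ≤ τ := hτ.1
    have int1 : IntervalIntegrable (fun s => u₀ s * (v a * Real.exp (U s))) volume a τ :=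
      ((hu₀int.integrableOn.mul_continuousOn
        ((continuous_const.mul (Real.continuous_exp.comp hUc)).continuousOn) isCompact_Icc).mono_set
        (uIcc_subset_Icc (left_mem_Icc.2 hab.le) hτ)).intervalIntegrable
    have int2 : IntervalIntegrable (fun s => u₀ s * (Real.exp (U s) * P s)) volume a τ :=
      ((hu₀int.integrableOn.mul_continuousOn
        (((Real.continuous_exp.comp hUc).mul hPc).continuousOn) isCompact_Icc).mono_set
        (uIcc_subset_Icc (left_mem_Icc.2 hab.le) hτ)).intervalIntegrable
    have hsplit : (∫ s in a..τ, u₀ s * G s)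
        = (∫ s in a..τ, u₀ s * (v a * Real.exp (U s)))
          + ∫ s in a..τ, u₀ s * (Real.exp (U s) * P s) := by
      rw [← intervalIntegral.integral_add int1 int2]
      refine intervalIntegral.integral_congr (fun s _ => ?_)
      rw [← hGx s]; ring
    have piece1 : (∫ s in a..τ, u₀ s * (v a * Real.exp (U s)))
        = v a * (Real.exp (U τ) - 1) := by
      have h1 : (∫ s in a..τ, u₀ s * (v a * Real.exp (U s)))
          = v a * ∫ s in a..τ, u₀ s * Real.exp (U s) := by
        rw [← intervalIntegral.integral_const_mul]
        exact intervalIntegral.integral_congr (fun s _ => by ring)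
      have h2 := expId u₀ hu₀int hu₀0 a τ haτ
      simp_rw [hUx] at h2
      rw [h1, h2]
    have piece2 : (∫ s in a..τ, u₀ s * (Real.exp (U s) * P s))
        = Real.exp (U τ) * P τ - ((v τ) - v a) := by
      have htri := tri_aux a τ haτ u₀ v₀ K (Real.exp (U b))
        hu₀int.integrableOn hv₀int.integrableOn hKc hKb
      have hL : (∫ s in a..τ, u₀ s * (Real.exp (U s) * P s))
          = ∫ s in a..τ, u₀ s * ∫ r in a..s, v₀ r * K (r, s) := by
        refine intervalIntegral.integral_congr (fun s _ => ?_)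
        have e1 : Real.exp (U s) * P s = ∫ r in a..s, v₀ r * K (r, s) := by
          rw [← hPx s, ← intervalIntegral.integral_const_mul]
          refine intervalIntegral.integral_congr (fun r _ => ?_)
          show Real.exp (U s) * (Real.exp (-U r) * v₀ r) = v₀ r * Real.exp (U s - U r)
          rw [sub_eq_add_neg, Real.exp_add]
          ring
        rw [e1]
      have hR : (∫ r in a..τ, v₀ r * ∫ s in r..τ, u₀ s * K (r, s))
          = ∫ r in a..τ, (v₀ r * (Real.exp (U τ - U r)) - v₀ r) := by
        refine intervalIntegral.integral_congr (fun r hr => ?_)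
        rw [uIcc_of_le haτ] at hr
        have hinner : (∫ s in r..τ, u₀ s * K (r, s)) = Real.exp (U τ - U r) - 1 := by
          have h2 := expId u₀ hu₀int hu₀0 r τ hr.2
          simp_rw [hUdiff] at h2
          exact h2
        rw [hinner]
        ring
      have hsplit2 : (∫ r in a..τ, (v₀ r * (Real.exp (U τ - U r)) - v₀ r))
          = (∫ r in a..τ, v₀ r * Real.exp (U τ - U r)) - ∫ r in a..τ, v₀ r := by
        refine intervalIntegral.integral_sub ?_ hv₀int.intervalIntegrable
        refine Integrable.intervalIntegrable ?_
        have hmeas : AEStronglyMeasurable (fun x => Real.exp (U τ - U x)) volume :=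
          (Real.continuous_exp.comp (continuous_const.sub hUc)).aestronglyMeasurable
        have hI : Integrable (fun x => Real.exp (U τ - U x) * v₀ x) :=
          hv₀int.bdd_mul (c := Real.exp (U b)) hmeas (Filter.Eventually.of_forall fun x => by
            rw [Real.norm_eq_abs, Real.abs_exp]
            exact Real.exp_le_exp.2 (by linarith [hU0 x, hUb τ]))
        exact hI.congr (Filter.Eventually.of_forall fun x => mul_comm _ _)
      have hfirst : (∫ r in a..τ, v₀ r * Real.exp (U τ - U r)) = Real.exp (U τ) * P τ := by
        rw [← hPx τ, ← intervalIntegral.integral_const_mul]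
        refine intervalIntegral.integral_congr (fun r _ => ?_)
        rw [sub_eq_add_neg, Real.exp_add]
        ring
      have hsecond : (∫ r in a..τ, v₀ r) = v τ - v a := by
        have e3 : (∫ r in a..τ, v₀ r) = ∫ r in a..τ, v' r := by
          refine intervalIntegral.integral_congr (fun r hr => ?_)
          rw [uIcc_of_le haτ] at hr
          exact hv₀eq r ⟨hr.1, hr.2.trans hτ.2⟩
        rw [e3, hv_ac τ hτ]
        ring
      rw [hL, htri, hR, hsplit2, hfirst, hsecond]
    rw [hsplit, piece1, piece2, ← hGx τ]
    ring
  -- Gronwall for d = w - G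
  have hwle : ∀ τ ∈ Icc a b, w τ - G τ ≤ ∫ s in a..τ, u₀ s * (w s - G s) := by
    intro τ hτ
    have haτ : a ≤ τ := hτ.1
    have hiw : IntervalIntegrable (fun s => u₀ s * w s) volume a τ :=
      ((hu₀int.integrableOn.mul_continuousOn hw_cont isCompact_Icc).mono_set
        (uIcc_subset_Icc (left_mem_Icc.2 hab.le) hτ)).intervalIntegrable
    have hiG : IntervalIntegrable (fun s => u₀ s * G s) volume a τ :=
      ((hu₀int.integrableOn.mul_continuousOn hGc.continuousOn isCompact_Icc).mono_set
        (uIcc_subset_Icc (left_mem_Icc.2 hab.le) hτ)).intervalIntegrable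
    have h1 : w τ ≤ v τ + ∫ s in a..τ, u₀ s * w s := by
      have h2 := hineq τ hτ
      have e1 : (∫ s in a..τ, u s * w s) = ∫ s in a..τ, u₀ s * w s := by
        refine intervalIntegral.integral_congr (fun s hs => ?_)
        rw [uIcc_of_le haτ] at hs
        rw [hu₀eq s ⟨hs.1, hs.2.trans hτ.2⟩]
      rwa [e1] at h2
    have h3 := hGeq τ hτ
    have h4 : (∫ s in a..τ, u₀ s * w s) - (∫ s in a..τ, u₀ s * G s)
        = ∫ s in a..τ, u₀ s * (w s - G s) := by
      rw [← intervalIntegral.integral_sub hiw hiG]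
      exact intervalIntegral.integral_congr (fun s _ => by ring)
    linarith
  have hgron := gron0 a b hab.le u₀ (fun s => w s - G s) hu₀int hu₀0
    (hw_cont.sub hGc.continuousOn) hwle
  intro t ht
  have hwG : w t ≤ G t := by
    have h5 := hgron t ht
    simp only [sub_nonpos] at h5
    linarith
  have hat : a ≤ t := ht.1
  -- identify G t with the claimed bound
  have e1 : (∫ s in a..t, u s) = U t := by
    rw [← hUx t]
    refine intervalIntegral.integral_congr (fun s hs => ?_)
    rw [uIcc_of_le hat] at hs
    rw [hu₀eq s ⟨hs.1, hs.2.trans ht.2⟩]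
  have e2 : (∫ s in a..t, Real.exp (∫ r in s..t, u r) * v' s)
      = Real.exp (U t) * P t := by
    have e3 : (∫ s in a..t, Real.exp (∫ r in s..t, u r) * v' s)
        = ∫ s in a..t, Real.exp (U t) * (Real.exp (-U s) * v₀ s) := by
      refine intervalIntegral.integral_congr (fun s hs => ?_)
      rw [uIcc_of_le hat] at hs
      have hs' : s ∈ Icc a b := ⟨hs.1, hs.2.trans ht.2⟩
      have e4 : (∫ r in s..t, u r) = U t - U s := by
        rw [← hUdiff]
        refine intervalIntegral.integral_congr (fun r hr => ?_)
        rw [uIcc_of_le hs.2] at hr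
        rw [hu₀eq r ⟨hs.1.trans hr.1, hr.2.trans ht.2⟩]
      rw [e4, hv₀eq s hs', sub_eq_add_neg, Real.exp_add]
      ring
    rw [e3, intervalIntegral.integral_const_mul, hPx]
  rw [e1, e2, hGx]
  exact hwG
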